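/- Lagrange duality for the box-constrained linear program (Lemma A.1): for any a ∈ ℝⁿ, sup over z ∈ Z of (1/n)·zᵀa equals inf over σ ∈ ℝᵖ with σ ≥ 0 componentwise of [−bᵀσ + (1/n)·‖Fᵀσ + a‖₁], and both the supremum and the infimum are attained. -/

import Mathlib

open scoped BigOperators

open scoped RealInnerProductSpace

section ConeLemmas
variable {ι : Type*} [Fintype ι] [DecidableEq ι] {E : Type*} [NormedAddCommGroup E]
  [NormedSpace ℝ E]


/-- nonnegative combinations of `v` -/
def coneSet (v : ι → E) : Set E := {x | ∃ y : ι → ℝ, (∀ i, 0 ≤ y i) ∧ x = ∑ i, y i • v i}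

/-- no nontrivial relation supported on `s` -/
def GoodS (v : ι → E) (s : Finset ι) : Prop :=
  ∀ c : ι → ℝ, (∀ i ∉ s, c i = 0) → ∑ i, c i • v i = 0 → ∀ i, c i = 0

theorem carath (v : ι → E) : ∀ (N : ℕ) (y : ι → ℝ),
    (Finset.univ.filter fun i => y i ≠ 0).card ≤ N → (∀ i, 0 ≤ y i) →
    ∃ z : ι → ℝ, (∀ i, 0 ≤ z i) ∧ (∑ i, z i • v i = ∑ i, y i • v i) ∧
      GoodS v (Finset.univ.filter fun i => z i ≠ 0) := by
  intro N
  induction N with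
  | zero =>
    intro y hcard hy
    have hemp : (Finset.univ.filter fun i => y i ≠ 0) = ∅ :=
      Finset.card_eq_zero.mp (Nat.le_zero.mp hcard)
    exact ⟨y, hy, rfl, fun c hc _ i => hc i (by simp [hemp])⟩
  | succ N ih =>
    intro y hcard hy
    set s : Finset ι := Finset.univ.filter fun i => y i ≠ 0 with hs
    by_cases hgood : GoodS v s
    · exact ⟨y, hy, rfl, hgood⟩
    · -- get a nontrivial relation `c` supported on `s`, with some positive entry
      simp only [GoodS, not_forall] at hgood
      obtain ⟨c₀, hc₀supp, hc₀sum, i₁, hi₁⟩ := hgood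
      -- make sure some entry is positive
      obtain ⟨c, hcsupp, hcsum, i₀, hi₀⟩ :
          ∃ c : ι → ℝ, (∀ i ∉ s, c i = 0) ∧ (∑ i, c i • v i = 0) ∧ ∃ i, 0 < c i := by
        rcases lt_or_gt_of_ne hi₁ with h | h
        · refine ⟨-c₀, fun i hi => by simp [hc₀supp i hi], by
            simpa [neg_smul] using congrArg Neg.neg hc₀sum, i₁, by simpa using h⟩
        · exact ⟨c₀, hc₀supp, hc₀sum, i₁, h⟩
      have hP : (Finset.univ.filter fun i => 0 < c i).Nonempty :=
        ⟨i₀, by simpa using hi₀⟩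
      obtain ⟨j₀, hj₀mem, hj₀min⟩ :=
        Finset.exists_min_image (Finset.univ.filter fun i => 0 < c i) (fun i => y i / c i) hP
      have hcj₀ : 0 < c j₀ := by simpa using hj₀mem
      set t : ℝ := y j₀ / c j₀ with ht
      have ht0 : 0 ≤ t := div_nonneg (hy j₀) hcj₀.le
      set z : ι → ℝ := fun i => y i - t * c i with hz
      have hznn : ∀ i, 0 ≤ z i := by
        intro i
        by_cases hci : 0 < c i
        · have h1 := hj₀min i (by simpa using hci)
          rw [le_div_iff₀ hci] at h1
          simp only [hz]
          linarith
        · push_neg at hci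
          have h2 : t * c i ≤ 0 := mul_nonpos_of_nonneg_of_nonpos ht0 hci
          have h3 := hy i
          simp only [hz]
          linarith
      have hzsum : ∑ i, z i • v i = ∑ i, y i • v i := by
        simp only [hz, sub_smul, Finset.sum_sub_distrib, mul_smul, ← Finset.smul_sum, hcsum,
          smul_zero, sub_zero]
      have hzj₀ : z j₀ = 0 := by
        simp only [hz, ht]
        field_simp
        ring
      have hzsupp : (Finset.univ.filter fun i => z i ≠ 0) ⊆ s.erase j₀ := by
        intro i hi
        simp only [Finset.mem_filter, Finset.mem_univ, true_and] at hi
        refine Finset.mem_erase.mpr ⟨?_, ?_⟩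
        · rintro rfl; exact hi hzj₀
        · by_contra his
          have h1 : y i = 0 := by
            by_contra hy0
            exact his (Finset.mem_filter.mpr ⟨Finset.mem_univ i, hy0⟩)
          have h2 : c i = 0 := hcsupp i his
          exact hi (by simp [hz, h1, h2])
      have hj₀s : j₀ ∈ s := by
        by_contra h
        exact absurd (hcsupp j₀ h) hcj₀.ne'
      have hcard' : (Finset.univ.filter fun i => z i ≠ 0).card ≤ N := by
        calc (Finset.univ.filter fun i => z i ≠ 0).card ≤ (s.erase j₀).card :=
              Finset.card_le_card hzsupp
          _ = s.card - 1 := Finset.card_erase_of_mem hj₀s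
          _ ≤ N := by omega
      obtain ⟨w, hw1, hw2, hw3⟩ := ih z hcard' hznn
      exact ⟨w, hw1, hw2.trans hzsum, hw3⟩

/-- the partial cone over a good subset -/
def ConeS (v : ι → E) (s : Finset ι) : Set E :=
  {x | ∃ y : ι → ℝ, (∀ i, 0 ≤ y i) ∧ (∀ i ∉ s, y i = 0) ∧ x = ∑ i, y i • v i}

theorem isClosed_coneS [T2Space E] [FiniteDimensional ℝ E]
    (v : ι → E) (s : Finset ι) (hs : GoodS v s) : IsClosed (ConeS v s) := by
  classical
  set T : ({ i // i ∈ s } → ℝ) →ₗ[ℝ] E := Fintype.linearCombination ℝ (fun i : s => v i) with hT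
  have hTapp : ∀ f, T f = ∑ i : s, f i • v i := fun f => Fintype.linearCombination_apply ℝ _ f
  -- extension
  have hext : ∀ f : { i // i ∈ s } → ℝ,
      ∑ i : s, f i • v i = ∑ i, (fun i => if h : i ∈ s then f ⟨i, h⟩ else 0) i • v i := by
    intro f
    have h1 : ∑ i, (fun i => if h : i ∈ s then f ⟨i, h⟩ else 0) i • v i
        = ∑ i ∈ s, (if h : i ∈ s then f ⟨i, h⟩ else 0) • v i := by
      rw [← Finset.sum_subset (Finset.subset_univ s)]
      intro i _ hi; simp [hi]
    rw [h1, ← Finset.sum_coe_sort s (fun i => (if h : i ∈ s then f ⟨i, h⟩ else 0) • v i)]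
    apply Finset.sum_congr rfl
    intro i _
    simp [i.2]
  have hker : LinearMap.ker T = ⊥ := by
    rw [LinearMap.ker_eq_bot']
    intro f hf
    rw [hTapp, hext] at hf
    funext i
    have := hs (fun i => if h : i ∈ s then f ⟨i, h⟩ else 0) (fun i hi => by simp [hi]) hf i
    simpa [i.2] using this
  have hemb := LinearMap.isClosedEmbedding_of_injective (𝕜 := ℝ) hker
  have himg : ConeS v s = T '' {f | ∀ i, 0 ≤ f i} := by
    ext x
    constructor
    · rintro ⟨y, hy, hys, rfl⟩
      refine ⟨fun i => y i, fun i => hy i, ?_⟩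
      rw [hTapp, hext]
      apply (Finset.sum_congr rfl ?_).symm
      intro i _
      by_cases h : i ∈ s <;> simp [h, hys i]
    · rintro ⟨f, hf, rfl⟩
      refine ⟨fun i => if h : i ∈ s then f ⟨i, h⟩ else 0, ?_, ?_, ?_⟩
      · intro i
        by_cases h : i ∈ s
        · simpa [h] using hf ⟨i, h⟩
        · simp [h]
      · intro i hi; simp [hi]
      · rw [hTapp, hext]
  rw [himg]
  apply hemb.isClosedMap
  have : {f : { i // i ∈ s } → ℝ | ∀ i, 0 ≤ f i} = ⋂ i, (fun f : { i // i ∈ s } → ℝ => f i) ⁻¹' Set.Ici 0 := by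
    ext f; simp [Set.mem_iInter]
  rw [this]
  exact isClosed_iInter fun i => (isClosed_Ici).preimage (continuous_apply i)

theorem isClosed_coneSet [T2Space E] [FiniteDimensional ℝ E] (v : ι → E) :
    IsClosed (coneSet v) := by
  classical
  have : coneSet v = ⋃ s : Finset ι, (if GoodS v s then ConeS v s else ∅) := by
    ext x
    simp only [Set.mem_iUnion]
    constructor
    · rintro ⟨y, hy, rfl⟩
      obtain ⟨z, hz, hzsum, hzgood⟩ := carath v (Finset.univ.filter fun i => y i ≠ 0).card y le_rfl hy
      refine ⟨Finset.univ.filter fun i => z i ≠ 0, ?_⟩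
      rw [if_pos hzgood]
      exact ⟨z, hz, fun i hi => by simpa using hi, hzsum.symm⟩
    · rintro ⟨s, hx⟩
      by_cases h : GoodS v s
      · rw [if_pos h] at hx
        obtain ⟨y, hy, _, rfl⟩ := hx
        exact ⟨y, hy, rfl⟩
      · rw [if_neg h] at hx; exact absurd hx (Set.notMem_empty x)
  rw [this]
  apply isClosed_iUnion_of_finite
  intro s
  by_cases h : GoodS v s
  · rw [if_pos h]; exact isClosed_coneS v s h
  · rw [if_neg h]; exact isClosed_empty

end ConeLemmas

section Farkas
variable {ι : Type*} [Fintype ι] [DecidableEq ι] {E : Type*} [NormedAddCommGroup E]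
  [InnerProductSpace ℝ E] [FiniteDimensional ℝ E]

theorem farkas (v : ι → E) (b : E)
    (h : ¬ ∃ y : ι → ℝ, (∀ i, 0 ≤ y i) ∧ b = ∑ i, y i • v i) :
    ∃ x : E, (∀ i, ⟪v i, x⟫ ≤ 0) ∧ 0 < ⟪b, x⟫ := by
  classical
  set K : ConvexCone ℝ E :=
    { carrier := coneSet v
      smul_mem' := by
        rintro c hc x ⟨y, hy, rfl⟩
        exact ⟨fun i => c * y i, fun i => mul_nonneg hc.le (hy i), by
          rw [Finset.smul_sum]; simp [smul_smul]⟩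
      add_mem' := by
        rintro x ⟨y, hy, rfl⟩ x' ⟨y', hy', rfl⟩
        exact ⟨fun i => y i + y' i, fun i => add_nonneg (hy i) (hy' i), by
          simp [add_smul, Finset.sum_add_distrib]⟩ } with hK
  have hne : (K : Set E).Nonempty := ⟨0, ⟨fun _ => 0, fun i => le_rfl, by simp⟩⟩
  have hcl : IsClosed (K : Set E) := isClosed_coneSet v
  have hb : b ∉ K := fun hbK => h (by exact hbK)
  let P : ProperCone ℝ E :=
    { carrier := coneSet v
      add_mem' := fun hx hy => K.add_mem' hx hy
      zero_mem' := ⟨fun _ => 0, fun _ => le_rfl, by simp⟩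
      smul_mem' := by
        rintro c x ⟨y, hy, rfl⟩
        exact ⟨fun i => c * y i, fun i => mul_nonneg c.2 (hy i), by
          rw [Finset.smul_sum]
          exact Finset.sum_congr rfl fun i _ => by rw [mul_smul]; rfl⟩
      isClosed' := hcl }
  obtain ⟨y, hy1, hy2⟩ := ProperCone.hyperplane_separation' P (fun (hbP : b ∈ P) => hb hbP)
  refine ⟨-y, fun i => ?_, ?_⟩
  · have hvi : v i ∈ K := by
      refine ⟨fun j => if j = i then 1 else 0, fun j => by positivity, ?_⟩
      simp only [ite_smul, one_smul, zero_smul]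
      rw [Finset.sum_ite_eq' Finset.univ i v]
      simp
    have := hy1 (v i) hvi
    rw [inner_neg_right]
    linarith
  · rw [inner_neg_right, real_inner_comm]
    linarith [real_inner_comm b y]

end Farkas

def ZSet (p n : ℕ) (F : Fin p → Fin n → ℝ) (b : Fin p → ℝ) : Set (Fin n → ℝ) :=
  {z | (∀ j, z j ∈ Set.Icc (-1:ℝ) 1) ∧ ∀ i, b i ≤ (1 / (n : ℝ)) * ∑ j, F i j * z j}

/-- the constraint vectors of the extended Farkas system -/
noncomputable def auxA (p n : ℕ) (F : Fin p → Fin n → ℝ) (b : Fin p → ℝ) :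
    (Fin p ⊕ (Fin n ⊕ Fin n)) ⊕ Unit → EuclideanSpace ℝ (Option (Fin n)) :=
  fun k => match k with
  | .inl (.inl i) => WithLp.toLp 2 (fun (o : Option (Fin n)) => match o with
      | none => -(b i)
      | some j => -(F i j) / (n : ℝ))
  | .inl (.inr (.inl j)) => WithLp.toLp 2 (fun (o : Option (Fin n)) => match o with
      | none => 1
      | some j' => if j' = j then 1 else 0)
  | .inl (.inr (.inr j)) => WithLp.toLp 2 (fun (o : Option (Fin n)) => match o with
      | none => 1
      | some j' => if j' = j then -1 else 0)
  | .inr _ => WithLp.toLp 2 (fun (o : Option (Fin n)) => match o with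
      | none => 1
      | some _ => 0)

noncomputable def auxC (n : ℕ) (a : Fin n → ℝ) (vstar : ℝ) : EuclideanSpace ℝ (Option (Fin n)) :=
  WithLp.toLp 2 (fun (o : Option (Fin n)) => match o with
  | none => vstar
  | some j => a j / (n : ℝ))

@[simp] lemma auxA_row_none (p n : ℕ) (F : Fin p → Fin n → ℝ) (b : Fin p → ℝ) (i : Fin p) :
    auxA p n F b (.inl (.inl i)) none = -(b i) := rfl
@[simp] lemma auxA_row_some (p n : ℕ) (F : Fin p → Fin n → ℝ) (b : Fin p → ℝ) (i : Fin p)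
    (j : Fin n) : auxA p n F b (.inl (.inl i)) (some j) = -(F i j) / (n : ℝ) := rfl
@[simp] lemma auxA_up_none (p n : ℕ) (F : Fin p → Fin n → ℝ) (b : Fin p → ℝ) (j : Fin n) :
    auxA p n F b (.inl (.inr (.inl j))) none = 1 := rfl
@[simp] lemma auxA_up_some (p n : ℕ) (F : Fin p → Fin n → ℝ) (b : Fin p → ℝ) (j j' : Fin n) :
    auxA p n F b (.inl (.inr (.inl j))) (some j') = if j' = j then 1 else 0 := rfl
@[simp] lemma auxA_dn_none (p n : ℕ) (F : Fin p → Fin n → ℝ) (b : Fin p → ℝ) (j : Fin n) :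
    auxA p n F b (.inl (.inr (.inr j))) none = 1 := rfl
@[simp] lemma auxA_dn_some (p n : ℕ) (F : Fin p → Fin n → ℝ) (b : Fin p → ℝ) (j j' : Fin n) :
    auxA p n F b (.inl (.inr (.inr j))) (some j') = if j' = j then -1 else 0 := rfl
@[simp] lemma auxA_sl_none (p n : ℕ) (F : Fin p → Fin n → ℝ) (b : Fin p → ℝ) (u : Unit) :
    auxA p n F b (.inr u) none = 1 := rfl
@[simp] lemma auxA_sl_some (p n : ℕ) (F : Fin p → Fin n → ℝ) (b : Fin p → ℝ) (u : Unit)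
    (j : Fin n) : auxA p n F b (.inr u) (some j) = 0 := rfl
@[simp] lemma auxC_none (n : ℕ) (a : Fin n → ℝ) (vstar : ℝ) : auxC n a vstar none = vstar := rfl
@[simp] lemma auxC_some (n : ℕ) (a : Fin n → ℝ) (vstar : ℝ) (j : Fin n) :
    auxC n a vstar (some j) = a j / (n : ℝ) := rfl

lemma euclid_inner (n : ℕ) (w x : EuclideanSpace ℝ (Option (Fin n))) :
    ⟪w, x⟫ = w none * x none + ∑ j, w (some j) * x (some j) := by
  simp [PiLp.inner_apply, RCLike.inner_apply, Fintype.sum_option, mul_comm]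

theorem stmt_5 (p n : ℕ) (hp : 0 < p) (hn : 0 < n)
    (F : Fin p → Fin n → ℝ) (b : Fin p → ℝ) (a : Fin n → ℝ)
    (hZ : (ZSet p n F b).Nonempty) :
    ∃ z ∈ ZSet p n F b, ∃ σ : Fin p → ℝ, (∀ i, 0 ≤ σ i) ∧
      (∀ z' ∈ ZSet p n F b,
        (1 / (n : ℝ)) * ∑ j, z' j * a j ≤ (1 / (n : ℝ)) * ∑ j, z j * a j) ∧
      (∀ σ' : Fin p → ℝ, (∀ i, 0 ≤ σ' i) →
        -(∑ i, b i * σ i) + (1 / (n : ℝ)) * ∑ j, |(∑ i, σ i * F i j) + a j| ≤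
          -(∑ i, b i * σ' i) + (1 / (n : ℝ)) * ∑ j, |(∑ i, σ' i * F i j) + a j|) ∧
      (1 / (n : ℝ)) * ∑ j, z j * a j =
        -(∑ i, b i * σ i) + (1 / (n : ℝ)) * ∑ j, |(∑ i, σ i * F i j) + a j| := by
  classical
  have hn0 : (0:ℝ) < (n:ℝ) := by exact_mod_cast hn
  -- Step 1 : the primal maximum is attained
  have hZclosed : IsClosed (ZSet p n F b) := by
    have h1 : IsClosed {z : Fin n → ℝ | ∀ j, z j ∈ Set.Icc (-1:ℝ) 1} := by
      have : {z : Fin n → ℝ | ∀ j, z j ∈ Set.Icc (-1:ℝ) 1} =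
          ⋂ j, (fun z : Fin n → ℝ => z j) ⁻¹' Set.Icc (-1:ℝ) 1 := by
        ext z; simp [Set.mem_iInter]
      rw [this]
      exact isClosed_iInter fun j => isClosed_Icc.preimage (continuous_apply j)
    have h2 : IsClosed {z : Fin n → ℝ | ∀ i, b i ≤ (1 / (n : ℝ)) * ∑ j, F i j * z j} := by
      have : {z : Fin n → ℝ | ∀ i, b i ≤ (1 / (n : ℝ)) * ∑ j, F i j * z j} =
          ⋂ i, {z : Fin n → ℝ | b i ≤ (1 / (n : ℝ)) * ∑ j, F i j * z j} := by
        ext z; simp [Set.mem_iInter]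
      rw [this]
      refine isClosed_iInter fun i => isClosed_le continuous_const ?_
      exact continuous_const.mul (continuous_finset_sum _ fun j _ => continuous_const.mul (continuous_apply j))
    exact h1.inter h2
  have hZcpt : IsCompact (ZSet p n F b) := by
    refine IsCompact.of_isClosed_subset
      (isCompact_univ_pi (s := fun _ : Fin n => Set.Icc (-1:ℝ) 1) fun _ => isCompact_Icc)
      hZclosed ?_
    intro z hz
    exact Set.mem_univ_pi.mpr fun j => hz.1 j
  obtain ⟨zs, hzs, hmax⟩ := hZcpt.exists_isMaxOn hZ
    (f := fun z => (1 / (n : ℝ)) * ∑ j, z j * a j)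
    (continuous_const.mul (continuous_finset_sum _ fun j _ =>
      (continuous_apply j).mul continuous_const)).continuousOn
  rw [isMaxOn_iff] at hmax
  set vstar := (1 / (n : ℝ)) * ∑ j, zs j * a j with hvstar
  -- key algebraic identity
  have key : ∀ (σ' : Fin p → ℝ) (z : Fin n → ℝ),
      (1 / (n : ℝ)) * (∑ j, z j * a j) +
        ∑ i, σ' i * ((1 / (n : ℝ)) * (∑ j, F i j * z j) - b i)
      = -(∑ i, b i * σ' i) +
        (1 / (n : ℝ)) * ∑ j, z j * ((∑ i, σ' i * F i j) + a j) := by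
    intro σ' z
    have swap : ∑ i, σ' i * ∑ j, F i j * z j = ∑ j, z j * ∑ i, σ' i * F i j := by
      simp only [Finset.mul_sum]
      rw [Finset.sum_comm]
      exact Finset.sum_congr rfl fun j _ => Finset.sum_congr rfl fun i _ => by ring
    have h2 : ∑ i, σ' i * ((1 / (n : ℝ)) * (∑ j, F i j * z j) - b i)
        = (1 / (n : ℝ)) * (∑ i, σ' i * ∑ j, F i j * z j) - ∑ i, b i * σ' i := by
      rw [Finset.mul_sum, ← Finset.sum_sub_distrib]
      exact Finset.sum_congr rfl fun i _ => by ring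
    have h3 : ∑ j, z j * ((∑ i, σ' i * F i j) + a j)
        = (∑ j, z j * ∑ i, σ' i * F i j) + ∑ j, z j * a j := by
      rw [← Finset.sum_add_distrib]
      exact Finset.sum_congr rfl fun j _ => by ring
    rw [h2, swap, h3]
    ring
  -- weak duality
  have weak : ∀ z ∈ ZSet p n F b, ∀ σ' : Fin p → ℝ, (∀ i, 0 ≤ σ' i) →
      (1 / (n : ℝ)) * ∑ j, z j * a j ≤
        -(∑ i, b i * σ' i) + (1 / (n : ℝ)) * ∑ j, |(∑ i, σ' i * F i j) + a j| := by
    intro z hz σ' hσ'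
    have hnn : 0 ≤ ∑ i, σ' i * ((1 / (n : ℝ)) * (∑ j, F i j * z j) - b i) :=
      Finset.sum_nonneg fun i _ => mul_nonneg (hσ' i) (by have := hz.2 i; linarith)
    have habs : ∑ j, z j * ((∑ i, σ' i * F i j) + a j) ≤ ∑ j, |(∑ i, σ' i * F i j) + a j| := by
      refine Finset.sum_le_sum fun j _ => ?_
      calc z j * ((∑ i, σ' i * F i j) + a j) ≤ |z j * ((∑ i, σ' i * F i j) + a j)| :=
            le_abs_self _
        _ = |z j| * |(∑ i, σ' i * F i j) + a j| := abs_mul _ _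
        _ ≤ 1 * |(∑ i, σ' i * F i j) + a j| := by
            refine mul_le_mul_of_nonneg_right ?_ (abs_nonneg _)
            exact abs_le.mpr ⟨(hz.1 j).1, (hz.1 j).2⟩
        _ = |(∑ i, σ' i * F i j) + a j| := one_mul _
    have hkey := key σ' z
    have : (1 / (n : ℝ)) * ∑ j, z j * ((∑ i, σ' i * F i j) + a j)
        ≤ (1 / (n : ℝ)) * ∑ j, |(∑ i, σ' i * F i j) + a j| :=
      mul_le_mul_of_nonneg_left habs (by positivity)
    linarith
  -- Farkas setup
  by_cases hFe : ∃ y : (Fin p ⊕ (Fin n ⊕ Fin n)) ⊕ Unit → ℝ, (∀ k, 0 ≤ y k) ∧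
      auxC n a vstar = ∑ k, y k • auxA p n F b k
  · obtain ⟨y, hy, hsum⟩ := hFe
    set σ : Fin p → ℝ := fun i => y (.inl (.inl i)) with hσdef
    set lam : Fin n → ℝ := fun j => y (.inl (.inr (.inl j))) with hlamdef
    set mu : Fin n → ℝ := fun j => y (.inl (.inr (.inr j))) with hmudef
    set sl : ℝ := y (.inr ()) with hsldef
    have happ : ∀ o, auxC n a vstar o = ∑ k, y k * auxA p n F b k o := by
      intro o
      have h := congrArg (fun w : EuclideanSpace ℝ (Option (Fin n)) => w o) hsum
      simp only [WithLp.ofLp_sum, WithLp.ofLp_smul, Finset.sum_apply, Pi.smul_apply,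
        smul_eq_mul] at h
      exact h
    have hnone : vstar = (∑ i, σ i * -(b i)) + ((∑ j, lam j) + (∑ j, mu j)) + sl := by
      have h := happ none
      simp only [auxC_none, Fintype.sum_sum_type, Fintype.sum_unique, auxA_row_none,
        auxA_up_none, auxA_dn_none, auxA_sl_none, mul_one] at h
      exact h
    have hsome : ∀ j, lam j - mu j = a j / (n : ℝ) + (1 / (n : ℝ)) * ∑ i, σ i * F i j := by
      intro j
      have h := happ (some j)
      have hrl : ∀ j', y (.inl (.inr (.inl j'))) = lam j' := fun _ => rfl
      have hrm : ∀ j', y (.inl (.inr (.inr j'))) = mu j' := fun _ => rfl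
      have hrs : ∀ i', y (.inl (.inl i')) = σ i' := fun _ => rfl
      simp only [auxC_some, Fintype.sum_sum_type, Fintype.sum_unique, auxA_row_some,
        auxA_up_some, auxA_dn_some, auxA_sl_some, mul_ite, mul_one, mul_neg, mul_zero,
        Finset.sum_ite_eq, Finset.sum_ite_eq', Finset.mem_univ, if_true, hrl, hrm, hrs] at h
      have hexp : ∑ i, σ i * (-(F i j) / (n:ℝ)) = -((1 / (n : ℝ)) * ∑ i, σ i * F i j) := by
        rw [Finset.mul_sum, ← Finset.sum_neg_distrib]
        exact Finset.sum_congr rfl fun i _ => by ring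
      rw [hexp] at h
      linarith
    -- dual value at σ is ≤ vstar
    have hdual_le : -(∑ i, b i * σ i) + (1 / (n : ℝ)) * ∑ j, |(∑ i, σ i * F i j) + a j|
        ≤ vstar := by
      have habs2 : ∀ j, |(∑ i, σ i * F i j) + a j| = (n : ℝ) * |lam j - mu j| := by
        intro j
        have h := hsome j
        have : (∑ i, σ i * F i j) + a j = (n : ℝ) * (lam j - mu j) := by
          rw [h]
          field_simp
          ring
        rw [this, abs_mul, abs_of_pos hn0]
      have hle : ∀ j, |lam j - mu j| ≤ lam j + mu j := by
        intro j
        have h1 : 0 ≤ lam j := hy _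
        have h2 : 0 ≤ mu j := hy _
        exact abs_le.mpr ⟨by linarith, by linarith⟩
      have hsum1 : (1 / (n : ℝ)) * ∑ j, |(∑ i, σ i * F i j) + a j| = ∑ j, |lam j - mu j| := by
        rw [Finset.sum_congr rfl fun j _ => habs2 j, Finset.mul_sum]
        exact Finset.sum_congr rfl fun j _ => by field_simp
      have hlm : ∑ j, |lam j - mu j| ≤ (∑ j, lam j) + ∑ j, mu j := by
        rw [← Finset.sum_add_distrib]
        exact Finset.sum_le_sum fun j _ => hle j
      have hbσ : ∑ i, σ i * -(b i) = -∑ i, b i * σ i := by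
        rw [← Finset.sum_neg_distrib]
        exact Finset.sum_congr rfl fun i _ => by ring
      have hsl : 0 ≤ sl := hy _
      rw [hsum1]
      linarith
    refine ⟨zs, hzs, σ, fun i => hy _, fun z' hz' => hmax z' hz', ?_, ?_⟩
    · intro σ' hσ'
      exact le_trans hdual_le (weak zs hzs σ' hσ')
    · exact le_antisymm (weak zs hzs σ fun i => hy _) hdual_le
  · exfalso
    obtain ⟨x, hx1, hx2⟩ := farkas (auxA p n F b) (auxC n a vstar) hFe
    have h1 : ∀ i, -(b i) * x none + ∑ j, -(F i j) / (n:ℝ) * x (some j) ≤ 0 := by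
      intro i
      have h := hx1 (.inl (.inl i))
      rw [euclid_inner] at h
      simpa using h
    have h2 : ∀ j, x none + x (some j) ≤ 0 := by
      intro j
      have h := hx1 (.inl (.inr (.inl j)))
      rw [euclid_inner] at h
      simpa [ite_mul, Finset.sum_ite_eq, Finset.sum_ite_eq'] using h
    have h3 : ∀ j, x none - x (some j) ≤ 0 := by
      intro j
      have h := hx1 (.inl (.inr (.inr j)))
      rw [euclid_inner] at h
      simp only [auxA_dn_none, auxA_dn_some, ite_mul, one_mul, zero_mul, neg_mul, neg_one_mul,
        Finset.sum_ite_eq, Finset.sum_ite_eq', Finset.mem_univ, if_true] at h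
      linarith
    have h4 : x none ≤ 0 := by
      have h := hx1 (.inr ())
      rw [euclid_inner] at h
      simpa using h
    have h5 : 0 < vstar * x none + ∑ j, a j / (n:ℝ) * x (some j) := by
      have h := hx2
      rw [euclid_inner] at h
      simpa using h
    rcases eq_or_lt_of_le h4 with ht | ht
    · -- x none = 0
      have hu : ∀ j, x (some j) = 0 := fun j =>
        le_antisymm (by linarith [h2 j]) (by linarith [h3 j])
      rw [ht] at h5
      simp [hu] at h5
    · -- x none < 0
      set z' : Fin n → ℝ := fun j => x (some j) / (-(x none)) with hz'def
      have hmt : (0:ℝ) < -(x none) := by linarith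
      have hz'Z : z' ∈ ZSet p n F b := by
        constructor
        · intro j
          constructor
          · exact (le_div_iff₀ hmt).mpr (by linarith [h3 j])
          · exact (div_le_one hmt).mpr (by linarith [h2 j])
        · intro i
          have hexp2 : ∑ j, -(F i j) / (n:ℝ) * x (some j)
              = -((1 / (n : ℝ)) * ∑ j, F i j * x (some j)) := by
            rw [Finset.mul_sum, ← Finset.sum_neg_distrib]
            exact Finset.sum_congr rfl fun j _ => by ring
          have hS : (1 / (n:ℝ)) * ∑ j, F i j * z' j
              = ((1 / (n:ℝ)) * ∑ j, F i j * x (some j)) / (-(x none)) := by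
            rw [Finset.mul_sum, Finset.mul_sum, Finset.sum_div]
            exact Finset.sum_congr rfl fun j _ => by rw [hz'def]; ring
          rw [hS]
          rw [le_div_iff₀ hmt]
          have := h1 i
          rw [hexp2] at this
          linarith
      have hX : (1 / (n:ℝ)) * ∑ j, z' j * a j
          = (∑ j, a j / (n:ℝ) * x (some j)) / (-(x none)) := by
        rw [Finset.mul_sum, Finset.sum_div]
        exact Finset.sum_congr rfl fun j _ => by rw [hz'def]; ring
      have hlt : vstar < (1 / (n:ℝ)) * ∑ j, z' j * a j := by
        rw [hX, lt_div_iff₀ hmt]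
        linarith
      linarith [hmax z' hz'Z]
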